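/- The linear map φ from the complex monoid algebra ℂIS_n to the groupoid convolution algebra B_n determined on basis elements by φ(s) = ∑_{t ≤ s} e_t (sum over all t ∈ IS_n with t ≤ s) is an isomorphism of unital ℂ-algebras, and its inverse is the linear map ψ determined by ψ(e_s) = ∑_{t ≤ s} μ(t,s)·t, where μ is the Möbius function of the poset (IS_n, ≤). -/

import Mathlib

/-- The monoid of partial functions on `{1,…,n}`, modeled as `Fin n → Option (Fin n)`,
under composition of partial functions (right to left). -/
abbrev PT (n : ℕ) := Fin n → Option (Fin n)

namespace PT

variable {n : ℕ}

/-- Composition of partial functions, right to left: `comp s t = s ∘ t`. -/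
def comp (s t : PT n) : PT n := fun x => (t x).bind s

/-- The domain of a partial function. -/
def dom (t : PT n) : Finset (Fin n) := Finset.univ.filter fun x => (t x).isSome

/-- The image (range) of a partial function. -/
def ran (t : PT n) : Finset (Fin n) := Finset.univ.filter fun y => ∃ x, t x = some y

/-- The identity partial function on the subset `X`. -/
def idOn (X : Finset (Fin n)) : PT n := fun x => if x ∈ X then some x else none

instance : Monoid (PT n) where
  mul := comp
  one := fun x => some x
  mul_assoc s t w := by
    funext x
    show (w x).bind (fun z => (t z).bind s) = ((w x).bind t).bind s
    exact (Option.bind_assoc (w x) t s).symm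
  one_mul t := by
    funext x
    show (t x).bind (fun y => some y) = t x
    cases t x <;> rfl
  mul_one t := by
    funext x
    show (some x).bind t = t x
    rfl

end PT

namespace PT

variable {n : ℕ}

/-- The natural partial order on partial functions: containment of graphs
(`s ≤ t` iff `dom s ⊆ dom t` and `t x = s x` for `x ∈ dom s`). -/
instance : PartialOrder (PT n) where
  le s t := ∀ x, s x ≠ none → s x = t x
  le_refl s := by intro x _; rfl
  le_trans s t u hst htu := by
    intro x hx
    rw [hst x hx]
    exact htu x (by rw [← hst x hx]; exact hx)
  le_antisymm s t hst hts := by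
    funext x
    by_cases hs : s x = none
    · by_cases ht : t x = none
      · rw [hs, ht]
      · rw [hts x ht] at ht; exact absurd hs ht
    · exact hst x hs

instance : LE (PT n) := @Preorder.toLE (PT n) (@PartialOrder.toPreorder (PT n) instPartialOrder)

instance : LT (PT n) := @Preorder.toLT (PT n) (@PartialOrder.toPreorder (PT n) instPartialOrder)

instance : DecidableRel (α := PT n) (· ≤ ·) := fun s t =>
  inferInstanceAs (Decidable (∀ x, s x ≠ none → s x = t x))

instance : DecidableRel (α := PT n) (· < ·) := fun s t =>
  decidable_of_iff (s ≤ t ∧ ¬ t ≤ s) lt_iff_le_not_ge.symm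

end PT

namespace PT

variable {n : ℕ}

/-- A partial function is injective (on its domain). -/
def Inj (t : PT n) : Prop := ∀ x y z, t x = some z → t y = some z → x = y

instance (t : PT n) : Decidable (Inj t) :=
  inferInstanceAs (Decidable (∀ x y z, t x = some z → t y = some z → x = y))

/-- The symmetric inverse monoid `IS_n` of injective partial functions on `{1,…,n}`,
as a submonoid of `PT_n`. -/
def ISsub (n : ℕ) : Submonoid (PT n) where
  carrier := {t | Inj t}
  one_mem' := by
    intro x y z hx hy
    exact (Option.some_injective _ hx).trans (Option.some_injective _ hy).symm
  mul_mem' := by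
    intro s t hs ht x y z hx hy
    have hx' : (t x).bind s = some z := hx
    have hy' : (t y).bind s = some z := hy
    rcases Option.bind_eq_some_iff.mp hx' with ⟨a, ha, hsa⟩
    rcases Option.bind_eq_some_iff.mp hy' with ⟨b, hb, hsb⟩
    have hab : a = b := hs a b z hsa hsb
    subst hab
    exact ht x y a ha hb

/-- `idOn X` is injective. -/
theorem inj_idOn (X : Finset (Fin n)) : Inj (idOn X) := by
  intro x y z hx hy
  unfold idOn at hx hy
  split at hx
  · split at hy
    · exact (Option.some_injective _ hx).trans (Option.some_injective _ hy).symm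
    · exact absurd hy (by simp)
  · exact absurd hx (by simp)

instance : DecidablePred (· ∈ ISsub n) := fun t => decidable_of_iff (Inj t) Iff.rfl

end PT

/-- The groupoid convolution algebra `B_n`: the vector space with basis
`{e_t : t ∈ IS_n}` and multiplication `e_s · e_t = e_{s ∘ t}` if `dom s = im t`,
else `0`. -/
noncomputable def ISAlg (n : ℕ) : Type := ↥(PT.ISsub n) →₀ ℂ

namespace ISAlg

variable {n : ℕ}

noncomputable instance : AddCommGroup (ISAlg n) :=
  inferInstanceAs (AddCommGroup (↥(PT.ISsub n) →₀ ℂ))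
noncomputable instance : Module ℂ (ISAlg n) :=
  inferInstanceAs (Module ℂ (↥(PT.ISsub n) →₀ ℂ))

/-- The coefficient of `t` in an element of `B_n`. -/
noncomputable def coeff (a : ISAlg n) : ↥(PT.ISsub n) → ℂ :=
  fun t => (show ↥(PT.ISsub n) →₀ ℂ from a) t

/-- The basis element `e_t` of `B_n`. -/
noncomputable def e (t : ↥(PT.ISsub n)) : ISAlg n :=
  show ↥(PT.ISsub n) →₀ ℂ from Finsupp.single t 1

/-- Convolution: `e_s · e_t = e_{s ∘ t}` if `dom s = im t`, and `0` otherwise. -/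
noncomputable instance : Mul (ISAlg n) :=
  ⟨fun a b =>
    show ↥(PT.ISsub n) →₀ ℂ from
      Finsupp.equivFunOnFinite.symm fun u =>
        ∑ p : ↥(PT.ISsub n) × ↥(PT.ISsub n),
          if PT.dom p.1.1 = PT.ran p.2.1 ∧ p.1 * p.2 = u then coeff a p.1 * coeff b p.2
          else 0⟩

/-- The multiplicative unit of `B_n` is `∑_{X ⊆ {1,…,n}} e_{id_X}`. -/
noncomputable instance : One (ISAlg n) :=
  ⟨∑ X : Finset (Fin n), e ⟨PT.idOn X, PT.inj_idOn X⟩⟩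

end ISAlg

section Aux

namespace PT

variable {n : ℕ}

lemma mul_apply'' (s t : PT n) (x : Fin n) : (s * t) x = (t x).bind s := rfl

lemma mem_dom' {t : PT n} {x : Fin n} : x ∈ dom t ↔ t x ≠ none := by
  simp [dom, Option.isSome_iff_ne_none]

lemma mem_ran' {t : PT n} {y : Fin n} : y ∈ ran t ↔ ∃ x, t x = some y := by
  simp [ran]

lemma Inj.mono {s t : PT n} (h : s ≤ t) (ht : Inj t) : Inj s := by
  intro x y z hx hy
  refine ht x y z ?_ ?_
  · rw [← h x (by simp [hx])]; exact hx
  · rw [← h y (by simp [hy])]; exact hy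

lemma mul_le_mul'' {a s b t : PT n} (ha : a ≤ s) (hb : b ≤ t) : a * b ≤ s * t := by
  intro x hx
  rw [mul_apply''] at hx ⊢
  rw [mul_apply'']
  cases hbx : b x with
  | none => rw [hbx] at hx; simp at hx
  | some c =>
    have hbne : b x ≠ none := by rw [hbx]; simp
    have htx : t x = some c := by rw [← hb x hbne, hbx]
    have hac : a c ≠ none := by
      intro h; rw [hbx] at hx; exact hx h
    rw [htx]
    show a c = s c
    exact ha c hac

/-- canonical second component of the factorization of `u ≤ s * t` -/
def canonB (t u : PT n) : PT n := fun x => if u x = none then none else t x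

/-- canonical first component of the factorization -/
def canonA (s b : PT n) : PT n := fun y => if ∃ x, b x = some y then s y else none

lemma canonB_le (t u : PT n) : canonB t u ≤ t := by
  intro x hx
  unfold canonB at hx ⊢
  split at hx
  · exact absurd rfl hx
  · next h => rw [if_neg h]

lemma canonA_le (s b : PT n) : canonA s b ≤ s := by
  intro y hy
  unfold canonA at hy ⊢
  split at hy
  · next h => rw [if_pos h]
  · exact absurd rfl hy

lemma canonB_spec {s t u : PT n} (hu : u ≤ s * t) {x : Fin n} {z : Fin n}
    (hx : u x = some z) :
    ∃ c, canonB t u x = some c ∧ t x = some c ∧ s c = some z := by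
  have h : (t x).bind s = some z := by
    have h1 := hu x (by simp [hx])
    rw [← mul_apply'', ← h1]
    exact hx
  rcases Option.bind_eq_some_iff.mp h with ⟨c, hc, hsc⟩
  exact ⟨c, by simp [canonB, hx, hc], hc, hsc⟩

lemma dom_canonA {s t u : PT n} (hu : u ≤ s * t) :
    dom (canonA s (canonB t u)) = ran (canonB t u) := by
  ext y
  rw [mem_dom', mem_ran']
  constructor
  · intro hy
    unfold canonA at hy
    split at hy
    · next h => exact h
    · exact absurd rfl hy
  · rintro ⟨x, hx⟩
    have hux : ∃ z, u x = some z := by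
      unfold canonB at hx
      split at hx
      · simp at hx
      · next h => exact Option.ne_none_iff_exists'.mp h
    obtain ⟨z, hz⟩ := hux
    obtain ⟨c, hc1, hc2, hc3⟩ := canonB_spec hu hz
    have hcy : c = y := by
      rw [hx] at hc1
      exact Option.some_injective _ hc1.symm
    subst hcy
    unfold canonA
    rw [if_pos ⟨x, hx⟩]
    simp [hc3]

lemma mul_canon {s t u : PT n} (hu : u ≤ s * t) :
    canonA s (canonB t u) * canonB t u = u := by
  funext x
  rw [mul_apply'']
  cases hux : u x with
  | none => simp [canonB, hux]
  | some z =>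
    obtain ⟨c, hc1, hc2, hc3⟩ := canonB_spec hu hux
    rw [hc1]
    show canonA s (canonB t u) c = some z
    unfold canonA
    rw [if_pos ⟨x, hc1⟩]
    exact hc3

lemma eq_canonA {s a b : PT n} (hd : dom a = ran b) (ha : a ≤ s) : a = canonA s b := by
  funext y
  unfold canonA
  split
  · next h =>
    have hy : y ∈ dom a := hd ▸ mem_ran'.mpr h
    exact ha y (mem_dom'.mp hy)
  · next h =>
    by_contra hne
    exact h (mem_ran'.mp (hd ▸ mem_dom'.mpr hne))

lemma eq_canonB {t u a b : PT n} (hab : a * b = u) (hd : dom a = ran b) (hb : b ≤ t) :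
    b = canonB t u := by
  funext x
  unfold canonB
  split
  · next h =>
    by_contra hbx
    obtain ⟨c, hc⟩ := Option.ne_none_iff_exists'.mp hbx
    have hcr : c ∈ ran b := mem_ran'.mpr ⟨x, hc⟩
    have hca : a c ≠ none := mem_dom'.mp (hd ▸ hcr)
    apply hca
    have h2 : u x = (b x).bind a := by rw [← hab]; rfl
    rw [h, hc] at h2
    exact h2.symm
  · next h =>
    have hbx : b x ≠ none := by
      intro hbn
      apply h
      rw [← hab, mul_apply'', hbn]
      rfl
    exact hb x hbx

lemma idOn_le_one (X : Finset (Fin n)) : idOn X ≤ (1 : PT n) := by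
  intro x hx
  unfold idOn at hx ⊢
  split at hx
  · next h => rw [if_pos h]; rfl
  · exact absurd rfl hx

lemma dom_idOn (X : Finset (Fin n)) : dom (idOn X) = X := by
  ext x
  rw [mem_dom']
  unfold idOn
  split <;> simp_all

lemma le_one_eq_idOn {t : PT n} (h : t ≤ (1 : PT n)) : t = idOn (dom t) := by
  funext x
  unfold idOn
  by_cases hx : t x = none
  · rw [if_neg (by rw [mem_dom']; exact fun h' => h' hx), hx]
  · have h1 : t x = some x := h x hx
    rw [if_pos (mem_dom'.mpr hx), h1]

end PT

namespace ISAlg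

open PT

variable {n : ℕ}

lemma ext' {a b : ISAlg n} (h : ∀ u, coeff a u = coeff b u) : a = b := by
  have h2 : (show ↥(PT.ISsub n) →₀ ℂ from a) = (show ↥(PT.ISsub n) →₀ ℂ from b) :=
    Finsupp.ext h
  exact h2

lemma coeff_e (t u : ↥(ISsub n)) : coeff (e t) u = if t = u then 1 else 0 :=
  Finsupp.single_apply

lemma coeff_zero (u : ↥(ISsub n)) : coeff (0 : ISAlg n) u = 0 := rfl

lemma coeff_add (a b : ISAlg n) (u : ↥(ISsub n)) :
    coeff (a + b) u = coeff a u + coeff b u := rfl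

lemma coeff_smul (c : ℂ) (a : ISAlg n) (u : ↥(ISsub n)) :
    coeff (c • a) u = c * coeff a u := rfl

lemma coeff_sum {ι : Type*} (F : Finset ι) (f : ι → ISAlg n) (u : ↥(ISsub n)) :
    coeff (∑ i ∈ F, f i) u = ∑ i ∈ F, coeff (f i) u := by
  classical
  induction F using Finset.induction_on with
  | empty => simp [coeff_zero]
  | insert _ _ hni ih =>
    rw [Finset.sum_insert hni, Finset.sum_insert hni, coeff_add, ih]

lemma coeff_mul (a b : ISAlg n) (u : ↥(ISsub n)) :
    coeff (a * b) u =
      ∑ p : ↥(ISsub n) × ↥(ISsub n),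
        if PT.dom p.1.1 = PT.ran p.2.1 ∧ p.1 * p.2 = u then coeff a p.1 * coeff b p.2
        else 0 := rfl

lemma zero_mul' (a : ISAlg n) : (0 : ISAlg n) * a = 0 := by
  apply ext'
  intro u
  rw [coeff_mul, coeff_zero]
  simp [coeff_zero]

lemma mul_zero' (a : ISAlg n) : a * (0 : ISAlg n) = 0 := by
  apply ext'
  intro u
  rw [coeff_mul, coeff_zero]
  simp [coeff_zero]

lemma add_mul' (a b c : ISAlg n) : (a + b) * c = a * c + b * c := by
  apply ext'
  intro u
  rw [coeff_add, coeff_mul, coeff_mul, coeff_mul, ← Finset.sum_add_distrib]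
  apply Finset.sum_congr rfl
  intro p _
  split
  · rw [coeff_add, add_mul]
  · rw [add_zero]

lemma mul_add' (a b c : ISAlg n) : a * (b + c) = a * b + a * c := by
  apply ext'
  intro u
  rw [coeff_add, coeff_mul, coeff_mul, coeff_mul, ← Finset.sum_add_distrib]
  apply Finset.sum_congr rfl
  intro p _
  split
  · rw [coeff_add, mul_add]
  · rw [add_zero]

lemma smul_mul' (c : ℂ) (a b : ISAlg n) : (c • a) * b = c • (a * b) := by
  apply ext'
  intro u
  rw [coeff_smul, coeff_mul, coeff_mul, Finset.mul_sum]
  apply Finset.sum_congr rfl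
  intro p _
  split
  · rw [coeff_smul, mul_assoc]
  · rw [mul_zero]

lemma mul_smul' (c : ℂ) (a b : ISAlg n) : a * (c • b) = c • (a * b) := by
  apply ext'
  intro u
  rw [coeff_smul, coeff_mul, coeff_mul, Finset.mul_sum]
  apply Finset.sum_congr rfl
  intro p _
  split
  · rw [coeff_smul]; ring
  · rw [mul_zero]

/-- the image of a basis monoid element under φ -/
noncomputable def S (s : ↥(ISsub n)) : ISAlg n :=
  ∑ t ∈ Finset.univ.filter (· ≤ s), e t

lemma coeff_S (s u : ↥(ISsub n)) : coeff (S s) u = if u ≤ s then 1 else 0 := by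
  rw [S, coeff_sum]
  simp only [coeff_e]
  rw [Finset.sum_ite_eq' _ u (fun _ => (1 : ℂ))]
  simp

lemma pair_filter_card (s t u : ↥(ISsub n)) :
    ((Finset.univ : Finset (↥(ISsub n) × ↥(ISsub n))).filter fun p =>
        (PT.dom p.1.1 = PT.ran p.2.1 ∧ p.1 * p.2 = u) ∧ p.1 ≤ s ∧ p.2 ≤ t).card
      = if u ≤ s * t then 1 else 0 := by
  split
  · next h =>
    have hu : (u : PT n) ≤ (s : PT n) * (t : PT n) := h
    have hbinj : Inj (canonB t.1 u.1) := Inj.mono (canonB_le _ _) t.2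
    have hainj : Inj (canonA s.1 (canonB t.1 u.1)) := Inj.mono (canonA_le _ _) s.2
    rw [Finset.card_eq_one]
    refine ⟨(⟨_, hainj⟩, ⟨_, hbinj⟩), ?_⟩
    ext p
    simp only [Finset.mem_filter, Finset.mem_univ, true_and, Finset.mem_singleton]
    constructor
    · rintro ⟨⟨hd, hab⟩, ha, hb⟩
      have hab' : (p.1 : PT n) * (p.2 : PT n) = (u : PT n) := congrArg Subtype.val hab
      have hB : (p.2 : PT n) = canonB t.1 u.1 := eq_canonB hab' hd hb
      have hA : (p.1 : PT n) = canonA s.1 (canonB t.1 u.1) := by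
        rw [← hB]; exact eq_canonA hd ha
      exact Prod.ext (Subtype.ext hA) (Subtype.ext hB)
    · rintro rfl
      exact ⟨⟨dom_canonA hu, Subtype.ext (mul_canon hu)⟩, canonA_le _ _, canonB_le _ _⟩
  · next h =>
    rw [Finset.card_eq_zero, Finset.filter_eq_empty_iff]
    rintro p -
    rintro ⟨⟨hd, hab⟩, ha, hb⟩
    apply h
    show (u : PT n) ≤ ((s * t : ↥(ISsub n)) : PT n)
    rw [← hab]
    exact mul_le_mul'' ha hb

lemma S_mul_S (s t : ↥(ISsub n)) : S s * S t = S (s * t) := by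
  apply ext'
  intro u
  rw [coeff_mul, coeff_S]
  have hterm : ∀ p : ↥(ISsub n) × ↥(ISsub n),
      (if PT.dom p.1.1 = PT.ran p.2.1 ∧ p.1 * p.2 = u then coeff (S s) p.1 * coeff (S t) p.2
        else 0)
      = if (PT.dom p.1.1 = PT.ran p.2.1 ∧ p.1 * p.2 = u) ∧ p.1 ≤ s ∧ p.2 ≤ t then (1 : ℂ)
        else 0 := by
    intro p
    rw [coeff_S, coeff_S]
    by_cases h1 : PT.dom p.1.1 = PT.ran p.2.1 ∧ p.1 * p.2 = u <;>
      by_cases h2 : p.1 ≤ s <;> by_cases h3 : p.2 ≤ t <;>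
      simp [h1, h2, h3]
  rw [Finset.sum_congr rfl fun p _ => hterm p, Finset.sum_boole, pair_filter_card]
  split <;> simp

lemma one_eq : (1 : ISAlg n) = ∑ X : Finset (Fin n), e ⟨PT.idOn X, PT.inj_idOn X⟩ := rfl

lemma S_one : S (1 : ↥(ISsub n)) = 1 := by
  rw [one_eq, S]
  refine Finset.sum_bij' (fun t _ => PT.dom t.1)
    (fun X _ => ⟨PT.idOn X, PT.inj_idOn X⟩) (fun t _ => Finset.mem_univ _)
    (fun X _ => ?_) (fun t ht => ?_) (fun X _ => ?_) (fun t ht => ?_)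
  · rw [Finset.mem_filter]
    exact ⟨Finset.mem_univ _, idOn_le_one X⟩
  · rw [Finset.mem_filter] at ht
    exact Subtype.ext (le_one_eq_idOn ht.2).symm
  · exact dom_idOn X
  · exact congrArg e (Subtype.ext (le_one_eq_idOn (Finset.mem_filter.mp ht).2))

end ISAlg

end Aux
open PT ISAlg in
/-- The linear map `φ : ℂIS_n → B_n` determined by
`φ(s) = ∑_{t ≤ s} e_t` is an isomorphism of unital `ℂ`-algebras (it is bijective,
multiplicative and unital), and its inverse is the linear map `ψ` determined by
`ψ(e_s) = ∑_{t ≤ s} μ(t,s)·t`, where `μ` is the Möbius function of the poset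
`(IS_n, ≤)`. -/
theorem monoidAlgebra_IS_iso_groupoidAlgebra (n : ℕ)
    (φ : MonoidAlgebra ℂ ↥(ISsub n) →ₗ[ℂ] ISAlg n)
    (hφ : ∀ s : ↥(ISsub n),
      φ (MonoidAlgebra.single s 1) = ∑ t ∈ Finset.univ.filter (· ≤ s), e t)
    (μ : ↥(ISsub n) → ↥(ISsub n) → ℂ)
    (hμ_refl : ∀ x : ↥(ISsub n), μ x x = 1)
    (hμ_rec : ∀ x y : ↥(ISsub n), x < y →
      μ x y = -∑ z ∈ Finset.univ.filter (fun z => x ≤ z ∧ z < y), μ x z)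
    (ψ : ISAlg n →ₗ[ℂ] MonoidAlgebra ℂ ↥(ISsub n))
    (hψ : ∀ s : ↥(ISsub n),
      ψ (e s) = ∑ t ∈ Finset.univ.filter (· ≤ s), μ t s • MonoidAlgebra.single t 1) :
    Function.Bijective φ ∧
    (∀ a b : MonoidAlgebra ℂ ↥(ISsub n), φ (a * b) = φ a * φ b) ∧
    φ 1 = 1 ∧
    (∀ x : MonoidAlgebra ℂ ↥(ISsub n), ψ (φ x) = x) ∧
    (∀ y : ISAlg n, φ (ψ y) = y) := by
  classical
  have hφS : ∀ s : ↥(ISsub n), φ (MonoidAlgebra.single s 1) = S s := hφ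
  have hsingle_smul : ∀ (g : ↥(ISsub n)) (r : ℂ),
      (MonoidAlgebra.single g r : MonoidAlgebra ℂ ↥(ISsub n)) = r • MonoidAlgebra.single g 1 := by
    intro g r
    rw [MonoidAlgebra.smul_single', mul_one]
  have hφ' : ∀ (g : ↥(ISsub n)) (r : ℂ), φ (MonoidAlgebra.single g r) = r • S g := by
    intro g r
    rw [hsingle_smul, map_smul, hφS]
  have hmul_single : ∀ (g h : ↥(ISsub n)) (r q : ℂ),
      φ (MonoidAlgebra.single g r * MonoidAlgebra.single h q)
        = φ (MonoidAlgebra.single g r) * φ (MonoidAlgebra.single h q) := by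
    intro g h r q
    rw [MonoidAlgebra.single_mul_single, hφ', hφ', hφ', ISAlg.smul_mul', ISAlg.mul_smul', S_mul_S,
      smul_smul]
  have hmul : ∀ a b : MonoidAlgebra ℂ ↥(ISsub n), φ (a * b) = φ a * φ b := by
    intro a b
    induction a using MonoidAlgebra.induction_linear with
    | zero => rw [zero_mul, map_zero, ISAlg.zero_mul']
    | add f g hf hg => rw [add_mul, map_add, hf, hg, map_add, ISAlg.add_mul']
    | single g r =>
      induction b using MonoidAlgebra.induction_linear with
      | zero => rw [mul_zero, map_zero, ISAlg.mul_zero']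
      | add f g' hf hg => rw [mul_add, map_add, hf, hg, map_add, ISAlg.mul_add']
      | single h q => exact hmul_single g h r q
  have hone : φ 1 = 1 := by
    rw [MonoidAlgebra.one_def, hφS, S_one]
  -- Möbius inversion
  have hmu_sum : ∀ v s : ↥(ISsub n),
      (∑ t ∈ Finset.univ.filter fun t => t ≤ s ∧ v ≤ t, μ v t) = if v = s then 1 else 0 := by
    intro v s
    by_cases hvs : v ≤ s
    · rcases eq_or_lt_of_le hvs with rfl | hlt
      · rw [if_pos rfl]
        have hfil : (Finset.univ.filter fun t => t ≤ v ∧ v ≤ t) = {v} := by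
          ext t
          simp only [Finset.mem_filter, Finset.mem_univ, true_and, Finset.mem_singleton]
          constructor
          · rintro ⟨h1, h2⟩; exact le_antisymm h1 h2
          · rintro rfl; exact ⟨le_refl _, le_refl _⟩
        rw [hfil, Finset.sum_singleton, hμ_refl]
      · rw [if_neg (ne_of_lt hlt)]
        have hsplit : (Finset.univ.filter fun t => t ≤ s ∧ v ≤ t)
            = insert s (Finset.univ.filter fun t => v ≤ t ∧ t < s) := by
          ext t
          simp only [Finset.mem_filter, Finset.mem_univ, true_and, Finset.mem_insert]
          constructor
          · rintro ⟨h1, h2⟩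
            rcases eq_or_lt_of_le h1 with rfl | h3
            · exact Or.inl rfl
            · exact Or.inr ⟨h2, h3⟩
          · rintro (rfl | ⟨h1, h2⟩)
            · exact ⟨le_refl _, le_of_lt hlt⟩
            · exact ⟨le_of_lt h2, h1⟩
        rw [hsplit, Finset.sum_insert (by simp), hμ_rec v s hlt, neg_add_cancel]
    · rw [if_neg (by rintro rfl; exact hvs (le_refl v))]
      rw [Finset.filter_false_of_mem, Finset.sum_empty]
      intro t _ht
      rintro ⟨h1, h2⟩
      exact hvs (h2.trans h1)
  have hψS : ∀ s : ↥(ISsub n), ψ (S s) = MonoidAlgebra.single s 1 := by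
    intro s
    rw [S, map_sum, Finset.sum_congr rfl fun t _ => hψ t]
    refine MonoidAlgebra.ext (Finsupp.ext fun v => ?_)
    rw [MonoidAlgebra.coeff_sum, Finsupp.finset_sum_apply]
    have hinner : ∀ t : ↥(ISsub n),
        ((∑ u ∈ Finset.univ.filter (· ≤ t), μ u t • MonoidAlgebra.single u 1 :
            MonoidAlgebra ℂ ↥(ISsub n)).coeff v)
          = if v ≤ t then μ v t else 0 := by
      intro t
      rw [MonoidAlgebra.coeff_sum, Finsupp.finset_sum_apply]
      have : ∀ u : ↥(ISsub n),
          ((μ u t • MonoidAlgebra.single u 1 : MonoidAlgebra ℂ ↥(ISsub n)).coeff v)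
            = if u = v then μ u t else 0 := by
        intro u
        rw [MonoidAlgebra.coeff_smul_apply, MonoidAlgebra.coeff_single, Finsupp.single_apply]
        split <;> simp
      rw [Finset.sum_congr rfl fun u _ => this u, Finset.sum_ite_eq' _ v (fun u => μ u t)]
      simp only [Finset.mem_filter, Finset.mem_univ, true_and]
    rw [Finset.sum_congr rfl fun t _ => hinner t, Finset.sum_ite, Finset.sum_const_zero,
      add_zero, Finset.filter_filter, hmu_sum v s, MonoidAlgebra.coeff_single, Finsupp.single_apply]
    by_cases h : v = s
    · simp [h]
    · rw [if_neg h, if_neg fun h' => h h'.symm]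
  have hψφ_all : ∀ x : MonoidAlgebra ℂ ↥(ISsub n), ψ (φ x) = x := by
    intro x
    induction x using MonoidAlgebra.induction_linear with
    | zero => rw [map_zero, map_zero]
    | add f g hf hg => rw [map_add, map_add, hf, hg]
    | single a b =>
      have hab : (MonoidAlgebra.single a b : MonoidAlgebra ℂ ↥(ISsub n))
          = b • MonoidAlgebra.single a 1 := hsingle_smul a b
      rw [hab, map_smul, map_smul, hφS, hψS]
  have hrange : ∀ s : ↥(ISsub n), e s ∈ LinearMap.range φ := by
    intro s
    induction s using WellFoundedLT.induction with
    | ind s ih =>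
      have hsplit : Finset.univ.filter (· ≤ s) = insert s (Finset.univ.filter (· < s)) := by
        ext t
        simp only [Finset.mem_filter, Finset.mem_univ, true_and, Finset.mem_insert]
        constructor
        · intro h
          rcases eq_or_lt_of_le h with rfl | h'
          · exact Or.inl rfl
          · exact Or.inr h'
        · rintro (rfl | h')
          · exact le_refl _
          · exact le_of_lt h'
      have hnm : s ∉ Finset.univ.filter (· < s) := by simp
      have he : e s = φ (MonoidAlgebra.single s 1) - ∑ t ∈ Finset.univ.filter (· < s), e t := by
        rw [hφ, hsplit, Finset.sum_insert hnm]
        abel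
      rw [he]
      refine Submodule.sub_mem _ (LinearMap.mem_range_self φ _) ?_
      exact Submodule.sum_mem _ fun t ht => ih t (by simpa using ht)
  have hsurj : Function.Surjective φ := by
    intro y
    have hy : (∑ u ∈ (show ↥(ISsub n) →₀ ℂ from y).support, coeff y u • e u) = y := by
      apply ext'
      intro v
      rw [coeff_sum]
      simp only [coeff_smul, coeff_e, mul_ite, mul_one, mul_zero]
      rw [Finset.sum_ite_eq' _ v (coeff y)]
      split
      · rfl
      · next h => exact (Finsupp.notMem_support_iff.mp h).symm
    have hmem : (∑ u ∈ (show ↥(ISsub n) →₀ ℂ from y).support, coeff y u • e u)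
        ∈ LinearMap.range φ :=
      Submodule.sum_mem _ fun u _ => Submodule.smul_mem _ _ (hrange u)
    obtain ⟨x, hx⟩ := hmem
    exact ⟨x, hx.trans hy⟩
  have hinj : Function.Injective φ := fun x y h => by
    rw [← hψφ_all x, h, hψφ_all y]
  have hφψ : ∀ y : ISAlg n, φ (ψ y) = y := by
    intro y
    obtain ⟨x, rfl⟩ := hsurj y
    rw [hψφ_all x]
  exact ⟨⟨hinj, hsurj⟩, hmul, hone, hψφ_all, hφψ⟩
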